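/- Let δ_1 = ∂_x + x∂_y and δ_2 = ∂_y act on A_{a,b} = K[x,y]/(x^k y^m : m > a or k + m > b) with b ≥ 2a. Then the subalgebra A'_{a,b} = K[δ_1, δ_2] ⊆ End_K(A_{a,b}) has K-dimension (a+1)(b+1) − a(a+1)/2, equal to dim_K A_{a,b}. -/

import Mathlib

open MvPolynomial Finset
set_option linter.unusedSectionVars false
set_option maxHeartbeats 1000000

namespace Stmt12Aux

variable {K : Type*} [Field K] [CharZero K]

noncomputable def fs (k m : ℕ) : Fin 2 →₀ ℕ := Finsupp.single 0 k + Finsupp.single 1 m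
@[simp] lemma fs_apply0 (k m : ℕ) : fs k m 0 = k := by simp [fs, Finsupp.single_apply]
@[simp] lemma fs_apply1 (k m : ℕ) : fs k m 1 = m := by simp [fs, Finsupp.single_apply]
lemma fs_eta (d : Fin 2 →₀ ℕ) : fs (d 0) (d 1) = d := by
  ext i; fin_cases i <;> simp
lemma fs_inj {k m k' m' : ℕ} (h : fs k m = fs k' m') : k = k' ∧ m = m' := by
  constructor
  · have := congrArg (fun f => f (0 : Fin 2)) h; simpa using this
  · have := congrArg (fun f => f (1 : Fin 2)) h; simpa using this
lemma Xpow_eq (k m : ℕ) :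
    (X 0 ^ k * X 1 ^ m : MvPolynomial (Fin 2) K) = monomial (fs k m) 1 := by
  rw [X_pow_eq_monomial, X_pow_eq_monomial, monomial_mul, one_mul]; rfl

lemma pd0_mono (k m : ℕ) :
    pderiv 0 ((X 0 : MvPolynomial (Fin 2) K) ^ k * X 1 ^ m) =
      (k : MvPolynomial (Fin 2) K) * (X 0 ^ (k - 1) * X 1 ^ m) := by
  rw [pderiv_mul, pderiv_pow, pderiv_pow, pderiv_X_self, pderiv_X_of_ne (by decide)]
  ring

lemma pd1_mono (k m : ℕ) :
    pderiv 1 ((X 0 : MvPolynomial (Fin 2) K) ^ k * X 1 ^ m) =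
      (m : MvPolynomial (Fin 2) K) * (X 0 ^ k * X 1 ^ (m - 1)) := by
  rw [pderiv_mul, pderiv_pow, pderiv_pow, pderiv_X_self, pderiv_X_of_ne (by decide)]
  ring

noncomputable def Fm (k m : ℕ) : MvPolynomial (Fin 2) K :=
  X 0 ^ k * (X 1 + C (2⁻¹ : K) * X 0 ^ 2) ^ m

lemma pd0_Fm (k m : ℕ) :
    pderiv 0 (Fm k m : MvPolynomial (Fin 2) K) =
      (k : MvPolynomial (Fin 2) K) * Fm (k - 1) m
        + (m : MvPolynomial (Fin 2) K) * Fm (k + 1) (m - 1) := by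
  have h2 : (C (2⁻¹ : K) : MvPolynomial (Fin 2) K) * 2 = 1 := by
    rw [← map_ofNat (C : K →+* MvPolynomial (Fin 2) K) 2, ← C_mul]
    norm_num
  unfold Fm
  simp only [pderiv_mul, pderiv_pow, pderiv_X_self, map_add,
    pderiv_X_of_ne (show (1:Fin 2) ≠ 0 by decide),
    pderiv_X_of_ne (show (0:Fin 2) ≠ 1 by decide), pderiv_C]
  linear_combination (X 0 ^ (k + 1) * (m : MvPolynomial (Fin 2) K) *
    (X 1 + C (2⁻¹:K) * X 0 ^ 2) ^ (m - 1)) * h2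

lemma pd1_Fm (k m : ℕ) :
    pderiv 1 (Fm k m : MvPolynomial (Fin 2) K) =
      (m : MvPolynomial (Fin 2) K) * Fm k (m - 1) := by
  unfold Fm
  simp only [pderiv_mul, pderiv_pow, pderiv_X_self, map_add,
    pderiv_X_of_ne (show (1:Fin 2) ≠ 0 by decide),
    pderiv_X_of_ne (show (0:Fin 2) ≠ 1 by decide), pderiv_C]
  ring

noncomputable def tau : MvPolynomial (Fin 2) K →ₐ[K] MvPolynomial (Fin 2) K :=
  aeval ![X 0, X 1 - C (2⁻¹ : K) * X 0 ^ 2]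

lemma tau_Fm (k m : ℕ) :
    tau (Fm k m : MvPolynomial (Fin 2) K) = X 0 ^ k * X 1 ^ m := by
  unfold tau Fm
  simp only [map_mul, map_pow, map_add, aeval_X, aeval_C]
  simp [algebraMap_eq]

noncomputable def pd (i : Fin 2) : Module.End K (MvPolynomial (Fin 2) K) :=
  (pderiv i).toLinearMap

lemma pd_apply (i : Fin 2) (g : MvPolynomial (Fin 2) K) : pd i g = pderiv i g := rfl

lemma coeff_pderiv (i : Fin 2) (d : Fin 2 →₀ ℕ) (g : MvPolynomial (Fin 2) K) :
    coeff d (pderiv i g) = ((d i + 1 : ℕ) : K) * coeff (d + Finsupp.single i 1) g := by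
  induction g using MvPolynomial.induction_on' with
  | add p q hp hq => simp [map_add, hp, hq, mul_add]
  | monomial e c =>
    rw [pderiv_monomial, coeff_monomial, coeff_monomial]
    rcases Nat.eq_zero_or_pos (e i) with he | he
    · have hsub : e - Finsupp.single i 1 = e := by
        ext j
        rcases eq_or_ne j i with rfl | hj
        · simp [he]
        · simp [Finsupp.single_apply, Ne.symm hj]
      rw [hsub]
      have hne : e ≠ d + Finsupp.single i 1 := by
        intro h
        apply absurd he
        rw [h]
        simp
      rw [if_neg hne]
      split_ifs with h
      · subst h; simp [he]
      · ring
    · have hiff : e - Finsupp.single i 1 = d ↔ e = d + Finsupp.single i 1 := by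
        constructor
        · intro h
          ext j
          rcases eq_or_ne j i with rfl | hj
          · have := congrArg (fun f => f j) h
            simp at this
            simp [← this]
            omega
          · have := congrArg (fun f => f j) h
            simp [Finsupp.single_apply, Ne.symm hj] at this ⊢
            omega
        · intro h
          subst h
          ext j
          rcases eq_or_ne j i with rfl | hj
          · simp
          · simp [Finsupp.single_apply, Ne.symm hj]
      split_ifs with h1 h2 h2
      · have h3 : e i = d i + 1 := by rw [h2]; simp
        rw [h3]
        push_cast
        ring
      · exact absurd (hiff.mp h1) h2
      · exact absurd (hiff.mpr h2) h1
      · ring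

lemma coeff_pd_pow (i : Fin 2) (n : ℕ) (d : Fin 2 →₀ ℕ) (g : MvPolynomial (Fin 2) K) :
    coeff d ((pd i ^ n) g) =
      (∏ t ∈ range n, ((d i + t + 1 : ℕ) : K)) * coeff (d + Finsupp.single i n) g := by
  induction n generalizing d g with
  | zero => simp
  | succ n ih =>
    rw [pow_succ, Module.End.mul_apply, ih, pd_apply, coeff_pderiv]
    rw [prod_range_succ]
    have h1 : (d + Finsupp.single i n) i + 1 = d i + n + 1 := by simp
    have h2 : d + Finsupp.single i n + Finsupp.single i 1 = d + Finsupp.single i (n + 1) := by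
      ext j
      rcases eq_or_ne j i with rfl | hj
      · simp
        omega
      · simp [Finsupp.single_apply, Ne.symm hj]
    rw [h1, h2]
    ring

lemma constcoeff_pd (i j : ℕ) (g : MvPolynomial (Fin 2) K) :
    coeff 0 ((pd 0 ^ i) ((pd 1 ^ j) g)) =
      ((i.factorial * j.factorial : ℕ) : K) * coeff (fs i j) g := by
  rw [coeff_pd_pow, coeff_pd_pow]
  have e2 : (0 : Fin 2 →₀ ℕ) + Finsupp.single 0 i + Finsupp.single 1 j = fs i j := by
    rw [zero_add]
    rfl
  rw [e2]
  simp only [Finsupp.add_apply, Finsupp.coe_zero, Pi.zero_apply, Finsupp.single_apply,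
    zero_add]
  norm_num
  have hf : ∀ c : ℕ, (∏ t ∈ range c, ((t : K) + 1)) = ((c.factorial : ℕ) : K) := by
    intro c
    rw [← Finset.prod_range_add_one_eq_factorial c]
    push_cast
    rfl
  rw [hf, hf]
  push_cast
  ring

lemma eq_zero_of_all_pd (g : MvPolynomial (Fin 2) K)
    (h : ∀ i j : ℕ, coeff 0 ((pd 0 ^ i) ((pd 1 ^ j) g)) = 0) : g = 0 := by
  ext d
  have := h (d 0) (d 1)
  rw [constcoeff_pd, fs_eta] at this
  rcases mul_eq_zero.mp this with h' | h'
  · exact absurd h' (Nat.cast_ne_zero.mpr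
      (Nat.mul_pos (Nat.factorial_pos _) (Nat.factorial_pos _)).ne')
  · simp [h']

lemma pd_commute : Commute (pd (K := K) 0) (pd 1) := by
  apply LinearMap.ext
  intro g
  rw [Module.End.mul_apply, Module.End.mul_apply]
  ext d
  rw [pd_apply, pd_apply, pd_apply, pd_apply, coeff_pderiv, coeff_pderiv, coeff_pderiv,
    coeff_pderiv, add_right_comm d (Finsupp.single 0 1) (Finsupp.single 1 1)]
  simp [Finsupp.single_apply]
  ring

section Eop
variable {M : Type*} [AddCommGroup M] [Module K M]

noncomputable def Eop (T1 T2 : Module.End K M) :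
    MvPolynomial (Fin 2) K →ₗ[K] Module.End K M :=
  (basisMonomials (Fin 2) K).constr K fun d => T1 ^ (d 0) * T2 ^ (d 1)

lemma Eop_monomial (T1 T2 : Module.End K M) (d : Fin 2 →₀ ℕ) (c : K) :
    Eop T1 T2 (monomial d c) = c • (T1 ^ (d 0) * T2 ^ (d 1)) := by
  have h : (monomial d c : MvPolynomial (Fin 2) K) = c • monomial d 1 := by
    rw [smul_monomial, smul_eq_mul, mul_one]
  rw [h, map_smul]
  congr 1
  have : (monomial d 1 : MvPolynomial (Fin 2) K) = basisMonomials (Fin 2) K d := by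
    rw [coe_basisMonomials]
  rw [this]
  exact Module.Basis.constr_basis _ _ _ _

lemma Eop_Xpow (T1 T2 : Module.End K M) (k m : ℕ) :
    Eop T1 T2 (X 0 ^ k * X 1 ^ m) = T1 ^ k * T2 ^ m := by
  rw [Xpow_eq, Eop_monomial, one_smul, fs_apply0, fs_apply1]

lemma Eop_one (T1 T2 : Module.End K M) : Eop T1 T2 1 = 1 := by
  have h : (1 : MvPolynomial (Fin 2) K) = monomial 0 1 := by rw [monomial_zero']; simp
  rw [h, Eop_monomial]
  simp

lemma Eop_C (T1 T2 : Module.End K M) (c : K) : Eop T1 T2 (C c) = c • 1 := by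
  have h : (C c : MvPolynomial (Fin 2) K) = monomial 0 c := by rw [monomial_zero']
  rw [h, Eop_monomial]
  simp

lemma Eop_X0 (T1 T2 : Module.End K M) : Eop T1 T2 (X 0) = T1 := by
  have := Eop_Xpow T1 T2 1 0
  simpa using this

lemma Eop_X1 (T1 T2 : Module.End K M) : Eop T1 T2 (X 1) = T2 := by
  have := Eop_Xpow T1 T2 0 1
  simpa using this

lemma Eop_mul (T1 T2 : Module.End K M) (h : Commute T1 T2) (p q : MvPolynomial (Fin 2) K) :
    Eop T1 T2 (p * q) = Eop T1 T2 p * Eop T1 T2 q := by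
  induction p using MvPolynomial.induction_on' with
  | add p1 p2 hp1 hp2 => rw [add_mul, map_add, map_add, hp1, hp2, add_mul]
  | monomial d c =>
    induction q using MvPolynomial.induction_on' with
    | add q1 q2 hq1 hq2 => rw [mul_add, map_add, map_add, hq1, hq2, mul_add]
    | monomial e c' =>
      rw [monomial_mul, Eop_monomial, Eop_monomial, Eop_monomial]
      rw [smul_mul_smul_comm]
      congr 1
      rw [Finsupp.add_apply, Finsupp.add_apply, pow_add, pow_add]
      simp only [mul_assoc]
      congr 1
      rw [← mul_assoc, ← mul_assoc, (h.pow_pow (e 0) (d 1)).eq]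

end Eop

def gF (a b : ℕ) : Finset (ℕ × ℕ) :=
  (range (b + 1) ×ˢ range (a + 1)).filter fun p => p.1 + p.2 ≤ b

lemma mem_gF {a b : ℕ} {p : ℕ × ℕ} : p ∈ gF a b ↔ p.2 ≤ a ∧ p.1 + p.2 ≤ b := by
  simp only [gF, mem_filter, mem_product, mem_range]
  omega

lemma card_gF {a b : ℕ} (hab : a ≤ b) :
    (gF a b).card = (a + 1) * (b + 1) - a * (a + 1) / 2 := by
  have hset : gF a b = (range (a + 1)).biUnion
      (fun m => (range (b + 1 - m)).image fun k => (k, m)) := by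
    ext p
    simp only [mem_gF, mem_biUnion, mem_range, mem_image]
    constructor
    · rintro ⟨h1, h2⟩
      exact ⟨p.2, by omega, p.1, by omega, rfl⟩
    · rintro ⟨m, hm, k, hk, rfl⟩
      simp
      omega
  rw [hset, card_biUnion]
  · have hcongr : ∀ m ∈ range (a + 1),
        ((range (b + 1 - m)).image fun k => (k, m)).card = b + 1 - m := by
      intro m _
      rw [card_image_of_injective _ (fun x y hxy => (Prod.mk.injEq _ _ _ _).mp hxy |>.1),
        card_range]
    rw [sum_congr rfl hcongr]
    rw [sum_tsub_distrib _ (fun m hm => by simp at hm; omega)]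
    rw [sum_const, card_range, smul_eq_mul, Finset.sum_range_id]
    rw [Nat.add_sub_cancel, mul_comm (a + 1) a]
  · intro m1 _ m2 _ hne
    simp only [disjoint_left, mem_image, mem_range]
    rintro p ⟨k1, _, rfl⟩ ⟨k2, _, h⟩
    exact hne (((Prod.mk.injEq _ _ _ _).mp h).2.symm)

noncomputable def cmap (a b : ℕ) :
    MvPolynomial (Fin 2) K →ₗ[K] (↥(gF a b) → K) :=
  LinearMap.pi fun g => lcoeff K (fs g.1.1 g.1.2)

lemma cmap_apply (a b : ℕ) (p : MvPolynomial (Fin 2) K) (g : ↥(gF a b)) :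
    cmap a b p g = coeff (fs g.1.1 g.1.2) p := rfl

noncomputable def svec (a b : ℕ) (v : ↥(gF a b) → K) : MvPolynomial (Fin 2) K :=
  ∑ g : ↥(gF a b), v g • monomial (fs g.1.1 g.1.2) 1

lemma cmap_svec (a b : ℕ) (v : ↥(gF a b) → K) : cmap (K := K) a b (svec a b v) = v := by
  funext g
  rw [cmap_apply, svec, coeff_sum]
  rw [Fintype.sum_eq_single g]
  · simp [coeff_monomial]
  · intro g' hne
    rw [coeff_smul, coeff_monomial]
    rw [if_neg, smul_zero]
    intro heq
    apply hne
    obtain ⟨h1, h2⟩ := fs_inj heq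
    exact Subtype.ext (Prod.ext h1 h2)

/-- the ideal of polynomials supported on bad exponents -/
def Jideal (a b : ℕ) : Ideal (MvPolynomial (Fin 2) K) where
  carrier := {p | ∀ d ∈ p.support, ¬(d 1 ≤ a ∧ d 0 + d 1 ≤ b)}
  add_mem' := by
    intro p q hp hq d hd
    rcases Finset.mem_union.mp (MvPolynomial.support_add hd) with h | h
    · exact hp d h
    · exact hq d h
  zero_mem' := by simp
  smul_mem' := by
    intro r p hp d hd
    intro hgood
    rw [smul_eq_mul, mem_support_iff, coeff_mul] at hd
    apply hd
    apply Finset.sum_eq_zero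
    rintro ⟨x, y⟩ hxy
    rw [Finset.HasAntidiagonal.mem_antidiagonal] at hxy
    rcases eq_or_ne (coeff y p) 0 with h0 | h0
    · rw [h0, mul_zero]
    · exfalso
      apply hp y (mem_support_iff.mpr h0)
      have hy1 : y 1 ≤ d 1 := by
        have := congrArg (fun f => f (1 : Fin 2)) hxy
        simp [Finsupp.add_apply] at this
        omega
      have hy0 : y 0 + y 1 ≤ d 0 + d 1 := by
        have := congrArg (fun f => f (0 : Fin 2)) hxy
        have h2 := congrArg (fun f => f (1 : Fin 2)) hxy
        simp [Finsupp.add_apply] at this h2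
        omega
      exact ⟨le_trans hy1 hgood.1, le_trans hy0 hgood.2⟩

lemma mem_I_iff (a b : ℕ) (I : Ideal (MvPolynomial (Fin 2) K))
    (hI : I = Ideal.span {p | ∃ k m : ℕ, (a < m ∨ b < k + m) ∧ p = X 0 ^ k * X 1 ^ m})
    (p : MvPolynomial (Fin 2) K) :
    p ∈ I ↔ ∀ d ∈ p.support, ¬(d 1 ≤ a ∧ d 0 + d 1 ≤ b) := by
  subst hI
  constructor
  · intro hp
    have hle : Ideal.span {p : MvPolynomial (Fin 2) K |
        ∃ k m : ℕ, (a < m ∨ b < k + m) ∧ p = X 0 ^ k * X 1 ^ m} ≤ Jideal a b := by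
      rw [Ideal.span_le]
      rintro q ⟨k, m, hbad, rfl⟩
      intro d hd
      rw [Xpow_eq] at hd
      have hsub := support_monomial_subset hd
      rw [Finset.mem_singleton] at hsub
      subst hsub
      simp only [fs_apply0, fs_apply1]
      omega
    exact hle hp
  · intro h
    rw [as_sum p]
    apply Ideal.sum_mem
    intro d hd
    have hbad := h d hd
    have : (monomial d (coeff d p) : MvPolynomial (Fin 2) K)
        = C (coeff d p) * (X 0 ^ (d 0) * X 1 ^ (d 1)) := by
      rw [Xpow_eq, fs_eta, C_mul_monomial, mul_one]
    rw [this]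
    apply Ideal.mul_mem_left
    apply Ideal.subset_span
    exact ⟨d 0, d 1, by omega, rfl⟩

lemma ker_cmap (a b : ℕ) (I : Ideal (MvPolynomial (Fin 2) K))
    (hI : I = Ideal.span {p | ∃ k m : ℕ, (a < m ∨ b < k + m) ∧ p = X 0 ^ k * X 1 ^ m}) :
    LinearMap.ker (cmap (K := K) a b) = I.restrictScalars K := by
  ext p
  rw [LinearMap.mem_ker, Submodule.restrictScalars_mem, mem_I_iff a b I hI]
  constructor
  · intro hz d hd
    intro hgood
    have hg : ((d 0, d 1) : ℕ × ℕ) ∈ gF a b := mem_gF.mpr hgood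
    have := congrArg (fun f => f (⟨(d 0, d 1), hg⟩ : ↥(gF a b))) hz
    simp only [cmap_apply, Pi.zero_apply] at this
    rw [fs_eta] at this
    exact mem_support_iff.mp hd this
  · intro h
    funext g
    rw [cmap_apply, Pi.zero_apply]
    by_contra h0
    have hmem := mem_support_iff.mpr h0
    apply h _ hmem
    have hg := mem_gF.mp g.2
    simp only [fs_apply0, fs_apply1]
    exact hg

lemma cmap_surjective (a b : ℕ) : Function.Surjective (cmap (K := K) a b) :=
  fun v => ⟨svec a b v, cmap_svec a b v⟩

noncomputable def quotEquiv (a b : ℕ) (I : Ideal (MvPolynomial (Fin 2) K))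
    (hI : I = Ideal.span {p | ∃ k m : ℕ, (a < m ∨ b < k + m) ∧ p = X 0 ^ k * X 1 ^ m}) :
    (MvPolynomial (Fin 2) K ⧸ I) ≃ₗ[K] (↥(gF a b) → K) := by
  have e0 := LinearMap.quotKerEquivOfSurjective (cmap (K := K) a b) (cmap_surjective a b)
  rw [ker_cmap a b I hI] at e0
  exact (Submodule.Quotient.restrictScalarsEquiv K (I : Submodule _ _)).symm.trans e0

lemma finrank_quot (a b : ℕ) (I : Ideal (MvPolynomial (Fin 2) K))
    (hI : I = Ideal.span {p | ∃ k m : ℕ, (a < m ∨ b < k + m) ∧ p = X 0 ^ k * X 1 ^ m}) :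
    Module.finrank K (MvPolynomial (Fin 2) K ⧸ I) = (gF a b).card := by
  rw [(quotEquiv a b I hI).finrank_eq, Module.finrank_pi, Fintype.card_coe]

lemma finiteDimensional_quot (a b : ℕ) (I : Ideal (MvPolynomial (Fin 2) K))
    (hI : I = Ideal.span {p | ∃ k m : ℕ, (a < m ∨ b < k + m) ∧ p = X 0 ^ k * X 1 ^ m}) :
    FiniteDimensional K (MvPolynomial (Fin 2) K ⧸ I) :=
  Module.Finite.equiv (quotEquiv a b I hI).symm


/-! ### The intertwining map Phi -/

noncomputable def phi0 (a b : ℕ) : MvPolynomial (Fin 2) K →ₗ[K] MvPolynomial (Fin 2) K :=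
  ∑ g : ↥(gF a b), (lcoeff K (fs g.1.1 g.1.2)).smulRight (Fm g.1.1 g.1.2)

lemma phi0_apply (a b : ℕ) (p : MvPolynomial (Fin 2) K) :
    phi0 a b p = ∑ g : ↥(gF a b), coeff (fs g.1.1 g.1.2) p • Fm g.1.1 g.1.2 := by
  simp [phi0, LinearMap.sum_apply, LinearMap.smulRight_apply, lcoeff_apply]

lemma tau_phi0 (a b : ℕ) (p : MvPolynomial (Fin 2) K) :
    tau (phi0 a b p) = svec a b (cmap a b p) := by
  rw [phi0_apply, map_sum]
  refine Finset.sum_congr rfl fun g _ => ?_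
  rw [map_smul, tau_Fm, Xpow_eq]
  rfl

lemma ker_phi0 (a b : ℕ) :
    LinearMap.ker (phi0 (K := K) a b) = LinearMap.ker (cmap (K := K) a b) := by
  ext p
  simp only [LinearMap.mem_ker]
  constructor
  · intro h
    have h2 : svec a b (cmap a b p) = 0 := by rw [← tau_phi0, h, map_zero]
    have h3 := cmap_svec a b (cmap a b p)
    rw [h2, map_zero] at h3
    exact h3.symm
  · intro h
    rw [phi0_apply]
    apply Finset.sum_eq_zero
    intro g _
    have h4 : coeff (fs g.1.1 g.1.2) p = 0 := by
      have := congrFun h g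
      rw [cmap_apply] at this
      exact this
    rw [h4, zero_smul]

lemma phi0_Xpow (a b : ℕ) (k m : ℕ) (hm : m ≤ a) (hkm : k + m ≤ b) :
    phi0 a b ((X 0 : MvPolynomial (Fin 2) K) ^ k * X 1 ^ m) = Fm k m := by
  rw [phi0_apply, Xpow_eq]
  rw [Fintype.sum_eq_single (⟨(k, m), mem_gF.mpr ⟨hm, hkm⟩⟩ : ↥(gF a b))]
  · simp [coeff_monomial]
  · intro g' hne
    rw [coeff_monomial, if_neg, zero_smul]
    intro heq
    apply hne
    obtain ⟨h1, h2⟩ := fs_inj heq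
    exact Subtype.ext (Prod.ext h1.symm h2.symm)

noncomputable def Phi (a b : ℕ) (I : Ideal (MvPolynomial (Fin 2) K))
    (hI : I = Ideal.span {p | ∃ k m : ℕ, (a < m ∨ b < k + m) ∧ p = X 0 ^ k * X 1 ^ m}) :
    (MvPolynomial (Fin 2) K ⧸ I) →ₗ[K] MvPolynomial (Fin 2) K :=
  (Submodule.liftQ (I.restrictScalars K) (phi0 a b)
    (le_of_eq (by rw [ker_phi0, ker_cmap a b I hI]))).comp
    (Submodule.Quotient.restrictScalarsEquiv K (I : Submodule _ _)).symm.toLinearMap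

lemma Phi_mk (a b : ℕ) (I : Ideal (MvPolynomial (Fin 2) K))
    (hI : I = Ideal.span {p | ∃ k m : ℕ, (a < m ∨ b < k + m) ∧ p = X 0 ^ k * X 1 ^ m})
    (p : MvPolynomial (Fin 2) K) :
    Phi a b I hI (Ideal.Quotient.mk I p) = phi0 a b p := by
  rfl

lemma Phi_inj (a b : ℕ) (I : Ideal (MvPolynomial (Fin 2) K))
    (hI : I = Ideal.span {p | ∃ k m : ℕ, (a < m ∨ b < k + m) ∧ p = X 0 ^ k * X 1 ^ m}) :
    Function.Injective (Phi a b I hI) := by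
  rw [← LinearMap.ker_eq_bot]
  rw [eq_bot_iff]
  intro z hz
  obtain ⟨p, rfl⟩ := Ideal.Quotient.mk_surjective z
  rw [LinearMap.mem_ker, Phi_mk] at hz
  have h1 : p ∈ LinearMap.ker (cmap (K := K) a b) := by
    rw [← ker_phi0]
    exact hz
  rw [ker_cmap a b I hI] at h1
  simp only [Submodule.mem_bot]
  exact Ideal.Quotient.eq_zero_iff_mem.mpr h1

lemma span_good (a b : ℕ) (I : Ideal (MvPolynomial (Fin 2) K))
    (hI : I = Ideal.span {p | ∃ k m : ℕ, (a < m ∨ b < k + m) ∧ p = X 0 ^ k * X 1 ^ m}) :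
    Submodule.span K (Set.range fun g : ↥(gF a b) =>
      Ideal.Quotient.mk I ((X 0 : MvPolynomial (Fin 2) K) ^ (g.1.1) * X 1 ^ (g.1.2))) = ⊤ := by
  rw [Submodule.eq_top_iff']
  intro z
  obtain ⟨p, rfl⟩ := Ideal.Quotient.mk_surjective z
  have key : Ideal.Quotient.mk I p = Ideal.Quotient.mk I (svec a b (cmap a b p)) := by
    rw [Ideal.Quotient.mk_eq_mk_iff_sub_mem]
    have h1 : p - svec a b (cmap a b p) ∈ LinearMap.ker (cmap (K := K) a b) := by
      rw [LinearMap.mem_ker, map_sub, cmap_svec, sub_self]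
    rw [ker_cmap a b I hI] at h1
    exact h1
  rw [key, svec, map_sum]
  apply Submodule.sum_mem
  intro g _
  have h2 : Ideal.Quotient.mk I (cmap a b p g • monomial (fs g.1.1 g.1.2) (1 : K))
      = cmap a b p g • Ideal.Quotient.mk I (monomial (fs g.1.1 g.1.2) (1 : K)) := by
    rw [← Ideal.Quotient.mkₐ_eq_mk (R₁ := K), map_smul]
  rw [h2, ← Xpow_eq]
  exact Submodule.smul_mem _ _ (Submodule.subset_span ⟨g, rfl⟩)

/-! ### Action formulas and intertwining -/

lemma natCast_C (n : ℕ) : (C ((n : K)) : MvPolynomial (Fin 2) K)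
    = (n : MvPolynomial (Fin 2) K) :=
  map_natCast (C : K →+* MvPolynomial (Fin 2) K) n

section Act

variable (a b : ℕ) (I : Ideal (MvPolynomial (Fin 2) K))
variable (D1 D2 : Module.End K (MvPolynomial (Fin 2) K ⧸ I))

lemma actD1
    (hD1 : ∀ k m : ℕ, m ≤ a → k + m ≤ b →
      D1 (Ideal.Quotient.mk I (X 0 ^ k * X 1 ^ m)) =
        Ideal.Quotient.mk I (pderiv 0 (X 0 ^ k * X 1 ^ m) + X 0 * pderiv 1 (X 0 ^ k * X 1 ^ m)))
    {k m : ℕ} (hm : m ≤ a) (hkm : k + m ≤ b) :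
    D1 (Ideal.Quotient.mk I (X 0 ^ k * X 1 ^ m)) =
      (k : K) • Ideal.Quotient.mk I ((X 0 : MvPolynomial (Fin 2) K) ^ (k - 1) * X 1 ^ m)
        + (m : K) • Ideal.Quotient.mk I ((X 0 : MvPolynomial (Fin 2) K) ^ (k + 1) * X 1 ^ (m - 1)) := by
  rw [hD1 k m hm hkm]
  have hpoly : pderiv 0 ((X 0 : MvPolynomial (Fin 2) K) ^ k * X 1 ^ m)
      + X 0 * pderiv 1 ((X 0 : MvPolynomial (Fin 2) K) ^ k * X 1 ^ m)
      = (k : K) • ((X 0 : MvPolynomial (Fin 2) K) ^ (k - 1) * X 1 ^ m)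
        + (m : K) • ((X 0 : MvPolynomial (Fin 2) K) ^ (k + 1) * X 1 ^ (m - 1)) := by
    rw [pd0_mono, pd1_mono, smul_eq_C_mul, smul_eq_C_mul, natCast_C, natCast_C]
    ring
  rw [hpoly, ← Ideal.Quotient.mkₐ_eq_mk (R₁ := K), map_add, map_smul, map_smul]

lemma actD2
    (hD2 : ∀ k m : ℕ, m ≤ a → k + m ≤ b →
      D2 (Ideal.Quotient.mk I (X 0 ^ k * X 1 ^ m)) =
        Ideal.Quotient.mk I (pderiv 1 (X 0 ^ k * X 1 ^ m)))
    {k m : ℕ} (hm : m ≤ a) (hkm : k + m ≤ b) :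
    D2 (Ideal.Quotient.mk I (X 0 ^ k * X 1 ^ m)) =
      (m : K) • Ideal.Quotient.mk I ((X 0 : MvPolynomial (Fin 2) K) ^ k * X 1 ^ (m - 1)) := by
  rw [hD2 k m hm hkm]
  have hpoly : pderiv 1 ((X 0 : MvPolynomial (Fin 2) K) ^ k * X 1 ^ m)
      = (m : K) • ((X 0 : MvPolynomial (Fin 2) K) ^ k * X 1 ^ (m - 1)) := by
    rw [pd1_mono, smul_eq_C_mul, natCast_C]
  rw [hpoly, ← Ideal.Quotient.mkₐ_eq_mk (R₁ := K), map_smul]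

lemma commD
    (hI : I = Ideal.span {p | ∃ k m : ℕ, (a < m ∨ b < k + m) ∧ p = X 0 ^ k * X 1 ^ m})
    (hD1 : ∀ k m : ℕ, m ≤ a → k + m ≤ b →
      D1 (Ideal.Quotient.mk I (X 0 ^ k * X 1 ^ m)) =
        Ideal.Quotient.mk I (pderiv 0 (X 0 ^ k * X 1 ^ m) + X 0 * pderiv 1 (X 0 ^ k * X 1 ^ m)))
    (hD2 : ∀ k m : ℕ, m ≤ a → k + m ≤ b →
      D2 (Ideal.Quotient.mk I (X 0 ^ k * X 1 ^ m)) =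
        Ideal.Quotient.mk I (pderiv 1 (X 0 ^ k * X 1 ^ m))) :
    Commute D1 D2 := by
  apply LinearMap.ext_on (span_good a b I hI)
  rintro z ⟨g, rfl⟩
  obtain ⟨⟨k, m⟩, hg⟩ := g
  obtain ⟨hm, hkm⟩ := mem_gF.mp hg
  simp only
  rw [Module.End.mul_apply, Module.End.mul_apply]
  cases m with
  | zero =>
    rw [actD2 a b I D2 hD2 hm hkm]
    rw [actD1 a b I D1 hD1 hm hkm]
    simp only [Nat.cast_zero, zero_smul, smul_zero, map_zero, add_zero, map_add, map_smul]
    rw [actD2 a b I D2 hD2 (show (0:ℕ) ≤ a by omega) (show k - 1 + 0 ≤ b by omega)]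
    simp
  | succ m' =>
    rw [actD2 a b I D2 hD2 hm hkm]
    simp only [Nat.add_sub_cancel]
    rw [map_smul, actD1 a b I D1 hD1 (by omega) (by omega)]
    rw [actD1 a b I D1 hD1 hm hkm]
    simp only [Nat.add_sub_cancel]
    rw [map_add, map_smul, map_smul]
    rw [actD2 a b I D2 hD2 (by omega : m' + 1 ≤ a) (by omega : k - 1 + (m' + 1) ≤ b)]
    rw [actD2 a b I D2 hD2 (by omega : m' ≤ a) (by omega : k + 1 + m' ≤ b)]
    simp only [Nat.add_sub_cancel, smul_add, smul_smul]
    rw [mul_comm ((m' + 1 : ℕ) : K) ((k : ℕ) : K)]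

lemma inter1
    (hI : I = Ideal.span {p | ∃ k m : ℕ, (a < m ∨ b < k + m) ∧ p = X 0 ^ k * X 1 ^ m})
    (hD1 : ∀ k m : ℕ, m ≤ a → k + m ≤ b →
      D1 (Ideal.Quotient.mk I (X 0 ^ k * X 1 ^ m)) =
        Ideal.Quotient.mk I (pderiv 0 (X 0 ^ k * X 1 ^ m) + X 0 * pderiv 1 (X 0 ^ k * X 1 ^ m))) :
    (Phi a b I hI).comp D1 = (pd 0).comp (Phi a b I hI) := by
  apply LinearMap.ext_on (span_good a b I hI)
  rintro z ⟨g, rfl⟩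
  obtain ⟨⟨k, m⟩, hg⟩ := g
  obtain ⟨hm, hkm⟩ := mem_gF.mp hg
  simp only [LinearMap.comp_apply]
  rw [actD1 a b I D1 hD1 hm hkm]
  rw [map_add, map_smul, map_smul]
  rw [Phi_mk, Phi_mk, Phi_mk]
  rw [phi0_Xpow a b k m hm hkm, phi0_Xpow a b (k - 1) m hm (by omega)]
  have hFm : pd 0 (Fm k m : MvPolynomial (Fin 2) K)
      = (k : K) • (Fm (k - 1) m : MvPolynomial (Fin 2) K)
        + (m : K) • (Fm (k + 1) (m - 1) : MvPolynomial (Fin 2) K) := by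
    rw [pd_apply, pd0_Fm, smul_eq_C_mul, smul_eq_C_mul, natCast_C, natCast_C]
  rw [hFm]
  congr 1
  cases m with
  | zero => simp
  | succ m' =>
    simp only [Nat.add_sub_cancel]
    rw [phi0_Xpow a b (k + 1) m' (by omega) (by omega)]

lemma inter2
    (hI : I = Ideal.span {p | ∃ k m : ℕ, (a < m ∨ b < k + m) ∧ p = X 0 ^ k * X 1 ^ m})
    (hD2 : ∀ k m : ℕ, m ≤ a → k + m ≤ b →
      D2 (Ideal.Quotient.mk I (X 0 ^ k * X 1 ^ m)) =
        Ideal.Quotient.mk I (pderiv 1 (X 0 ^ k * X 1 ^ m))) :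
    (Phi a b I hI).comp D2 = (pd 1).comp (Phi a b I hI) := by
  apply LinearMap.ext_on (span_good a b I hI)
  rintro z ⟨g, rfl⟩
  obtain ⟨⟨k, m⟩, hg⟩ := g
  obtain ⟨hm, hkm⟩ := mem_gF.mp hg
  simp only [LinearMap.comp_apply]
  rw [actD2 a b I D2 hD2 hm hkm]
  rw [map_smul, Phi_mk, Phi_mk, phi0_Xpow a b k m hm hkm]
  have hFm : pd 1 (Fm k m : MvPolynomial (Fin 2) K)
      = (m : K) • (Fm k (m - 1) : MvPolynomial (Fin 2) K) := by
    rw [pd_apply, pd1_Fm, smul_eq_C_mul, natCast_C]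
  rw [hFm]
  cases m with
  | zero => simp
  | succ m' =>
    simp only [Nat.add_sub_cancel]
    rw [phi0_Xpow a b k m' (by omega) (by omega)]

lemma interAll
    (hI : I = Ideal.span {p | ∃ k m : ℕ, (a < m ∨ b < k + m) ∧ p = X 0 ^ k * X 1 ^ m})
    (hD1 : ∀ k m : ℕ, m ≤ a → k + m ≤ b →
      D1 (Ideal.Quotient.mk I (X 0 ^ k * X 1 ^ m)) =
        Ideal.Quotient.mk I (pderiv 0 (X 0 ^ k * X 1 ^ m) + X 0 * pderiv 1 (X 0 ^ k * X 1 ^ m)))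
    (hD2 : ∀ k m : ℕ, m ≤ a → k + m ≤ b →
      D2 (Ideal.Quotient.mk I (X 0 ^ k * X 1 ^ m)) =
        Ideal.Quotient.mk I (pderiv 1 (X 0 ^ k * X 1 ^ m)))
    (P : MvPolynomial (Fin 2) K) (z : MvPolynomial (Fin 2) K ⧸ I) :
    Phi a b I hI (Eop D1 D2 P z) = Eop (pd 0) (pd 1) P (Phi a b I hI z) := by
  have iter1 : ∀ (n : ℕ) (z : MvPolynomial (Fin 2) K ⧸ I),
      Phi a b I hI ((D1 ^ n) z) = ((pd 0 : Module.End K _) ^ n) (Phi a b I hI z) := by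
    intro n
    induction n with
    | zero => intro z; simp
    | succ n ih =>
      intro z
      rw [pow_succ, Module.End.mul_apply, ih, pow_succ, Module.End.mul_apply]
      congr 1
      exact LinearMap.congr_fun (inter1 a b I D1 hI hD1) z
  have iter2 : ∀ (n : ℕ) (z : MvPolynomial (Fin 2) K ⧸ I),
      Phi a b I hI ((D2 ^ n) z) = ((pd 1 : Module.End K _) ^ n) (Phi a b I hI z) := by
    intro n
    induction n with
    | zero => intro z; simp
    | succ n ih =>
      intro z
      rw [pow_succ, Module.End.mul_apply, ih, pow_succ, Module.End.mul_apply]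
      congr 1
      exact LinearMap.congr_fun (inter2 a b I D2 hI hD2) z
  induction P using MvPolynomial.induction_on' with
  | add p q hp hq =>
    simp only [map_add, LinearMap.add_apply, hp, hq]
  | monomial d c =>
    rw [Eop_monomial, Eop_monomial, LinearMap.smul_apply, LinearMap.smul_apply, map_smul]
    congr 1
    rw [Module.End.mul_apply, Module.End.mul_apply, iter1, iter2]

end Act

/-! ### The apolarity pairing -/

noncomputable def Bmap (W : Submodule K (MvPolynomial (Fin 2) K)) :
    MvPolynomial (Fin 2) K →ₗ[K] Module.Dual K ↥W where
  toFun P := (lcoeff K 0).comp ((Eop (pd 0) (pd 1) P).comp W.subtype)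
  map_add' P Q := by
    ext w
    simp [map_add, LinearMap.add_apply]
  map_smul' c P := by
    ext w
    simp [map_smul, LinearMap.smul_apply]

lemma Bmap_apply (W : Submodule K (MvPolynomial (Fin 2) K)) (P : MvPolynomial (Fin 2) K)
    (w : ↥W) : Bmap W P w = coeff 0 (Eop (pd 0) (pd 1) P (w : MvPolynomial (Fin 2) K)) := rfl

lemma Eop_pd_conj (P : MvPolynomial (Fin 2) K) (i j : ℕ) (w : MvPolynomial (Fin 2) K) :
    (pd 0 ^ i) ((pd 1 ^ j) (Eop (pd 0) (pd 1) P w))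
      = Eop (pd 0) (pd 1) P ((pd 0 ^ i * pd 1 ^ j : Module.End K (MvPolynomial (Fin 2) K)) w) := by
  have e1 : Eop (pd (K := K) 0) (pd 1) ((X 0 ^ i * X 1 ^ j) * P)
      = (pd 0 ^ i * pd 1 ^ j) * Eop (pd 0) (pd 1) P := by
    rw [Eop_mul _ _ pd_commute, Eop_Xpow]
  have e2 : Eop (pd (K := K) 0) (pd 1) ((X 0 ^ i * X 1 ^ j) * P)
      = Eop (pd 0) (pd 1) P * (pd 0 ^ i * pd 1 ^ j) := by
    rw [mul_comm ((X 0 : MvPolynomial (Fin 2) K) ^ i * X 1 ^ j) P, Eop_mul _ _ pd_commute,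
      Eop_Xpow]
  have h := congrArg (fun T : Module.End K (MvPolynomial (Fin 2) K) => T w) (e1.symm.trans e2)
  simpa only [Module.End.mul_apply] using h

lemma ker_Bmap_aux (W : Submodule K (MvPolynomial (Fin 2) K))
    (hstab : ∀ (Q w : MvPolynomial (Fin 2) K), w ∈ W → Eop (pd 0) (pd 1) Q w ∈ W)
    (P : MvPolynomial (Fin 2) K) (hP : Bmap W P = 0) :
    ∀ w ∈ W, Eop (pd 0) (pd 1) P w = 0 := by
  intro w hw
  apply eq_zero_of_all_pd
  intro i j
  rw [Eop_pd_conj]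
  have h5 : (pd 0 ^ i * pd 1 ^ j : Module.End K (MvPolynomial (Fin 2) K)) w ∈ W := by
    have := hstab (X 0 ^ i * X 1 ^ j) w hw
    rwa [Eop_Xpow] at this
  exact LinearMap.congr_fun hP ⟨(pd 0 ^ i * pd 1 ^ j : Module.End K (MvPolynomial (Fin 2) K)) w, h5⟩

lemma eq_zero_of_pairing (w : MvPolynomial (Fin 2) K)
    (hall : ∀ P : MvPolynomial (Fin 2) K, coeff 0 (Eop (pd 0) (pd 1) P w) = 0) : w = 0 := by
  apply eq_zero_of_all_pd
  intro i j
  have := hall (X 0 ^ i * X 1 ^ j)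
  rwa [Eop_Xpow, Module.End.mul_apply] at this

noncomputable def Cmap (W : Submodule K (MvPolynomial (Fin 2) K))
    (N : Submodule K (MvPolynomial (Fin 2) K)) (hNB : ∀ P ∈ N, Bmap W P = 0) :
    ↥W →ₗ[K] Module.Dual K (MvPolynomial (Fin 2) K ⧸ N) where
  toFun w := Submodule.liftQ N ((Bmap W).flip w) (fun P hP => by
    rw [LinearMap.mem_ker, LinearMap.flip_apply, hNB P hP]
    rfl)
  map_add' w1 w2 := by
    refine LinearMap.ext fun z => ?_
    obtain ⟨P, rfl⟩ := Submodule.Quotient.mk_surjective N z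
    simp [Submodule.liftQ_apply, LinearMap.flip_apply, map_add]
  map_smul' c w := by
    refine LinearMap.ext fun z => ?_
    obtain ⟨P, rfl⟩ := Submodule.Quotient.mk_surjective N z
    simp [Submodule.liftQ_apply, LinearMap.flip_apply, map_smul]

lemma Cmap_apply (W N : Submodule K (MvPolynomial (Fin 2) K)) (hNB : ∀ P ∈ N, Bmap W P = 0)
    (w : ↥W) (P : MvPolynomial (Fin 2) K) :
    Cmap W N hNB w (Submodule.Quotient.mk P) = Bmap W P w := by
  simp [Cmap, Submodule.liftQ_apply, LinearMap.flip_apply]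

end Stmt12Aux

open Stmt12Aux in
/-- The subalgebra `A'_{a,b} = K[δ_1, δ_2] ⊆ End_K(A_{a,b})` has dimension
`(a+1)(b+1) − a(a+1)/2`, equal to `dim_K A_{a,b}`. -/
theorem stmt_12 (K : Type*) [Field K] [CharZero K] (a b : ℕ) (ha : 1 ≤ a) (hb : 2 * a ≤ b)
    (I : Ideal (MvPolynomial (Fin 2) K))
    (hI : I = Ideal.span {p | ∃ k m : ℕ, (a < m ∨ b < k + m) ∧ p = X 0 ^ k * X 1 ^ m})
    (D1 D2 : Module.End K (MvPolynomial (Fin 2) K ⧸ I))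
    (hD1 : ∀ k m : ℕ, m ≤ a → k + m ≤ b →
      D1 (Ideal.Quotient.mk I (X 0 ^ k * X 1 ^ m)) =
        Ideal.Quotient.mk I (pderiv 0 (X 0 ^ k * X 1 ^ m) + X 0 * pderiv 1 (X 0 ^ k * X 1 ^ m)))
    (hD2 : ∀ k m : ℕ, m ≤ a → k + m ≤ b →
      D2 (Ideal.Quotient.mk I (X 0 ^ k * X 1 ^ m)) =
        Ideal.Quotient.mk I (pderiv 1 (X 0 ^ k * X 1 ^ m))) :
    Module.finrank K (Algebra.adjoin K {D1, D2}) = (a + 1) * (b + 1) - a * (a + 1) / 2 ∧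
    Module.finrank K (Algebra.adjoin K {D1, D2})
      = Module.finrank K (MvPolynomial (Fin 2) K ⧸ I) := by
  classical
  haveI hfd : FiniteDimensional K (MvPolynomial (Fin 2) K ⧸ I) :=
    finiteDimensional_quot a b I hI
  have hcomm : Commute D1 D2 := commD a b I D1 D2 hI hD1 hD2
  have hinj : Function.Injective (Phi a b I hI) := Phi_inj a b I hI
  set W : Submodule K (MvPolynomial (Fin 2) K) := LinearMap.range (Phi a b I hI) with hWdef
  haveI : FiniteDimensional K ↥W :=
    Module.Finite.equiv (LinearEquiv.ofInjective (Phi a b I hI) hinj)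
  have hrankW : Module.finrank K ↥W = Module.finrank K (MvPolynomial (Fin 2) K ⧸ I) :=
    (LinearEquiv.ofInjective (Phi a b I hI) hinj).finrank_eq.symm
  have hstab : ∀ Q w : MvPolynomial (Fin 2) K, w ∈ W → Eop (pd 0) (pd 1) Q w ∈ W := by
    rintro Q w ⟨z, rfl⟩
    exact ⟨Eop D1 D2 Q z, (interAll a b I D1 D2 hI hD1 hD2 Q z)⟩
  set N : Submodule K (MvPolynomial (Fin 2) K) := LinearMap.ker (Eop D1 D2) with hNdef
  have hkerB : LinearMap.ker (Bmap W) = N := by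
    ext P
    simp only [LinearMap.mem_ker, hNdef]
    constructor
    · intro hP
      have hF0 : ∀ w ∈ W, Eop (pd 0) (pd 1) P w = 0 := ker_Bmap_aux W hstab P hP
      apply LinearMap.ext
      intro z
      rw [LinearMap.zero_apply]
      apply hinj
      rw [map_zero, interAll a b I D1 D2 hI hD1 hD2 P z]
      exact hF0 _ ⟨z, rfl⟩
    · intro hP
      apply LinearMap.ext
      intro w
      obtain ⟨z, hz⟩ := w.2
      rw [Bmap_apply, ← hz, ← interAll a b I D1 D2 hI hD1 hD2 P z]
      have hz0 : Eop D1 D2 P z = 0 := by rw [hP]; rfl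
      rw [hz0, map_zero]
      rfl
  haveI hfdEnd : Module.Finite K (Module.End K (MvPolynomial (Fin 2) K ⧸ I)) :=
    Module.Finite.linearMap _ _ _ _
  haveI hfdQN : FiniteDimensional K (MvPolynomial (Fin 2) K ⧸ N) := by
    rw [hNdef]
    exact Module.Finite.equiv (LinearMap.quotKerEquivRange (Eop D1 D2)).symm
  have hineq1 : Module.finrank K (MvPolynomial (Fin 2) K ⧸ N) ≤ Module.finrank K ↥W := by
    have hinj2 : Function.Injective (Submodule.liftQ N (Bmap W) (le_of_eq hkerB.symm)) := by
      rw [← LinearMap.ker_eq_bot]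
      exact Submodule.ker_liftQ_eq_bot N (Bmap W) _ (le_of_eq hkerB)
    calc Module.finrank K (MvPolynomial (Fin 2) K ⧸ N)
        ≤ Module.finrank K (Module.Dual K ↥W) :=
          LinearMap.finrank_le_finrank_of_injective hinj2
      _ = Module.finrank K ↥W := Subspace.dual_finrank_eq
  have hNB : ∀ P ∈ N, Bmap W P = 0 := fun P hP => by
    rw [← LinearMap.mem_ker, hkerB]; exact hP
  have hineq2 : Module.finrank K ↥W ≤ Module.finrank K (MvPolynomial (Fin 2) K ⧸ N) := by
    have hinj3 : Function.Injective (Cmap W N hNB) := by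
      rw [← LinearMap.ker_eq_bot, eq_bot_iff]
      intro w hw
      rw [LinearMap.mem_ker] at hw
      have hzero : (w : MvPolynomial (Fin 2) K) = 0 := by
        apply eq_zero_of_pairing
        intro P
        have := LinearMap.congr_fun hw (Submodule.Quotient.mk P)
        rw [Cmap_apply, Bmap_apply] at this
        simpa using this
      simp only [Submodule.mem_bot]
      exact Subtype.ext hzero
    calc Module.finrank K ↥W
        ≤ Module.finrank K (Module.Dual K (MvPolynomial (Fin 2) K ⧸ N)) :=
          LinearMap.finrank_le_finrank_of_injective hinj3
      _ = Module.finrank K (MvPolynomial (Fin 2) K ⧸ N) := Subspace.dual_finrank_eq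
  -- the adjoin subalgebra is the range of Eop
  have hone : (1 : Module.End K (MvPolynomial (Fin 2) K ⧸ I)) ∈ LinearMap.range (Eop D1 D2) :=
    ⟨1, Eop_one D1 D2⟩
  have hmulmem : ∀ x y : Module.End K (MvPolynomial (Fin 2) K ⧸ I),
      x ∈ LinearMap.range (Eop D1 D2) → y ∈ LinearMap.range (Eop D1 D2) →
        x * y ∈ LinearMap.range (Eop D1 D2) := by
    rintro x y ⟨p, rfl⟩ ⟨q, rfl⟩
    exact ⟨p * q, Eop_mul D1 D2 hcomm p q⟩
  have hSA : Algebra.adjoin K {D1, D2}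
      = (LinearMap.range (Eop D1 D2)).toSubalgebra hone hmulmem := by
    apply le_antisymm
    · apply Algebra.adjoin_le
      rintro x (rfl | rfl)
      · exact ⟨X 0, Eop_X0 _ _⟩
      · exact ⟨X 1, Eop_X1 _ _⟩
    · have hXmem : ∀ i : Fin 2, Eop D1 D2 (X i) ∈ Algebra.adjoin K ({D1, D2} : Set _) := by
        intro i
        obtain rfl | rfl : i = 0 ∨ i = 1 := by omega
        · rw [Eop_X0]
          exact Algebra.subset_adjoin (by simp)
        · rw [Eop_X1]
          exact Algebra.subset_adjoin (by simp)
      rintro x ⟨P, rfl⟩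
      induction P using MvPolynomial.induction_on with
      | C c =>
        rw [Eop_C]
        exact Subalgebra.smul_mem _ (one_mem _) c
      | add p q hp hq =>
        rw [map_add]
        exact add_mem hp hq
      | mul_X p i hp =>
        rw [Eop_mul D1 D2 hcomm]
        exact mul_mem hp (hXmem i)
  have e1 : Module.finrank K (Algebra.adjoin K {D1, D2})
      = Module.finrank K ↥(LinearMap.range (Eop D1 D2)) := by
    rw [hSA]
    exact (Subalgebra.finrank_toSubmodule _).symm
  have e2 : Module.finrank K ↥(LinearMap.range (Eop D1 D2))
      = Module.finrank K (MvPolynomial (Fin 2) K ⧸ N) :=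
    (LinearMap.quotKerEquivRange (Eop D1 D2)).finrank_eq.symm
  have e3 : Module.finrank K (MvPolynomial (Fin 2) K ⧸ N) = Module.finrank K ↥W :=
    le_antisymm hineq1 hineq2
  have efin : Module.finrank K (Algebra.adjoin K {D1, D2})
      = Module.finrank K (MvPolynomial (Fin 2) K ⧸ I) := by
    rw [e1, e2, e3, hrankW]
  refine ⟨?_, efin⟩
  rw [efin, finrank_quot a b I hI, card_gF (show a ≤ b by omega)]
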